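/- Let B be a unital complex *-algebra and h : B → ℂ a linear functional such that h(b*) is the complex conjugate of h(b) for all b ∈ B, and such that h is faithful in the sense that for b ∈ B, if h(b·c) = 0 for all c ∈ B then b = 0. Let φ : B → B be a surjective algebra homomorphism with h ∘ φ = h and such that h(a*·φ(a)) is a real number for every a ∈ B. Then φ(φ(a*)*) = a for all a ∈ B. -/

import Mathlib

/-- Lemma 7.2 of the paper: let `h` be a faithful linear functional on a unital complex
*-algebra `B` with `h (b*) = conj (h b)`, and let `φ` be a surjective algebra endomorphism of
`B` preserving `h` such that `h (a* * φ a)` is real for all `a`. Then `φ (φ (a*)*) = a` for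
all `a`. -/
theorem involutive_of_hermitian_form
    {B : Type*} [Ring B] [Algebra ℂ B] [StarRing B] [StarModule ℂ B]
    (h : B →ₗ[ℂ] ℂ)
    (hstar : ∀ b : B, h (star b) = starRingEnd ℂ (h b))
    (hfaith : ∀ b : B, (∀ c : B, h (b * c) = 0) → b = 0)
    (φ : B →ₐ[ℂ] B) (hsurj : Function.Surjective φ)
    (hφh : ∀ b : B, h (φ b) = h b)
    (hreal : ∀ a : B, (h (star a * φ a)).im = 0) :
    ∀ a : B, φ (star (φ (star a))) = a := by
  -- The hermitian symmetry from polarization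
  have hs : ∀ a b : B, h (star a * φ b) = starRingEnd ℂ (h (star b * φ a)) := by
    intro a b
    set zab := h (star a * φ b) with hzab
    set zba := h (star b * φ a) with hzba
    have e1 : zab.im + zba.im = 0 := by
      have hsum : h (star (a + b) * φ (a + b))
          = h (star a * φ a) + zab + zba + h (star b * φ b) := by
        simp only [star_add, map_add, add_mul, mul_add, hzab, hzba]
        ring
      have := hreal (a + b)
      rw [hsum] at this
      simp only [Complex.add_im, hreal a, hreal b] at this
      linarith
    have e2 : zab.re - zba.re = 0 := by
      have hsum : h (star (a + Complex.I • b) * φ (a + Complex.I • b))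
          = h (star a * φ a) + Complex.I * zab - Complex.I * zba
            + h (star b * φ b) := by
        simp only [star_add, star_smul, map_add, map_smul, add_mul, mul_add,
          smul_mul_assoc, mul_smul_comm, smul_smul, Complex.star_def,
          Complex.conj_I, smul_eq_mul, neg_mul, neg_smul, Complex.I_mul_I,
          hzab, hzba, map_neg, map_smul]
        ring_nf
        simp [Complex.I_sq]
      have := hreal (a + Complex.I • b)
      rw [hsum] at this
      simp only [Complex.add_im, Complex.sub_im, Complex.mul_im,
        Complex.I_re, Complex.I_im, hreal a, hreal b] at this
      linarith
    apply Complex.ext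
    · simpa using by linarith
    · simp only [Complex.conj_im]; linarith
  -- Key identity: h (star a * φ b) = h (star (φ a) * b)
  have key : ∀ a b : B, h (star a * φ b) = h (star (φ a) * b) := by
    intro a b
    rw [hs a b]
    have : star (star b * φ a) = star (φ a) * b := by
      rw [star_mul, star_star]
    rw [← this, hstar]
  intro a
  have : φ (star (φ (star a))) - a = 0 := by
    apply hfaith
    intro c
    obtain ⟨d, rfl⟩ := hsurj c
    have h1 : h (φ (star (φ (star a))) * φ d) = h (a * φ d) := by
      rw [← map_mul, hφh]
      have := key (star a) d
      rw [star_star] at this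
      rw [← this]
    rw [sub_mul, map_sub, h1, sub_self]
  exact sub_eq_zero.mp this
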